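/- Let ε > 0 and let η : ℝ × [t₁, t₂] → ℝ be such that for each t the map x ↦ η(x,t) is a Schwartz function on ℝ, the map t ↦ η(·,t) is continuously differentiable as a curve in the Schwartz space, and η satisfies the KdV equation ∂_t η + ∂_x η + (3/2) ε η ∂_x η + (1/6) ε ∂_x³ η = 0 at every point. Then ∫_ℝ ( (1/3)(∂_x η(x,t₁))² − η(x,t₁)³ ) dx = ∫_ℝ ( (1/3)(∂_x η(x,t₂))² − η(x,t₂)³ ) dx. -/

import Mathlib

open MeasureTheory SchwartzMap

open Set Filter Topology

lemma schwartz_temperate (f : 𝓢(ℝ, ℝ)) : Function.HasTemperateGrowth (f : ℝ → ℝ) := by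
  refine ⟨f.smooth ⊤, fun n => ⟨0, SchwartzMap.seminorm ℝ 0 n f, fun x => ?_⟩⟩
  simpa using f.norm_iteratedFDeriv_le_seminorm ℝ n x

noncomputable def mulS (f g : 𝓢(ℝ, ℝ)) : 𝓢(ℝ, ℝ) :=
  SchwartzMap.bilinLeftCLM (ContinuousLinearMap.mul ℝ ℝ) (schwartz_temperate g) f

@[simp] lemma mulS_apply (f g : 𝓢(ℝ, ℝ)) (x : ℝ) : mulS f g x = f x * g x := rfl

lemma integral_hasDerivAt_eq_zero (f : 𝓢(ℝ, ℝ)) (g : ℝ → ℝ)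
    (hg : ∀ x, HasDerivAt (f : ℝ → ℝ) (g x) x) : ∫ x, g x = 0 := by
  have hgd : g = deriv (f : ℝ → ℝ) := funext fun x => ((hg x).deriv).symm
  have hco : (deriv (f : ℝ → ℝ)) = ((SchwartzMap.derivCLM ℝ ℝ f : 𝓢(ℝ, ℝ)) : ℝ → ℝ) :=
    funext fun x => (SchwartzMap.derivCLM_apply ℝ f x).symm
  have hint : Integrable (deriv (f : ℝ → ℝ)) := by
    rw [hco]; exact (SchwartzMap.derivCLM ℝ ℝ f).integrable
  have hbot : Tendsto (f : ℝ → ℝ) atBot (𝓝 0) :=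
    (zero_at_infty f).mono_left atBot_le_cocompact
  have htop : Tendsto (f : ℝ → ℝ) atTop (𝓝 0) :=
    (zero_at_infty f).mono_left atTop_le_cocompact
  have h1 : ∫ x in Iic (0:ℝ), deriv (f : ℝ → ℝ) x = f 0 - 0 :=
    integral_Iic_of_hasDerivAt_of_tendsto f.continuous.continuousWithinAt
      (fun x _ => f.differentiableAt.hasDerivAt) hint.integrableOn hbot
  have h2 : ∫ x in Ioi (0:ℝ), deriv (f : ℝ → ℝ) x = 0 - f 0 :=
    integral_Ioi_of_hasDerivAt_of_tendsto f.continuous.continuousWithinAt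
      (fun x _ => f.differentiableAt.hasDerivAt) hint.integrableOn htop
  rw [hgd, ← intervalIntegral.integral_Iic_add_Ioi hint.integrableOn hint.integrableOn, h1, h2]
  ring

lemma schwartz_decay_bound (f : 𝓢(ℝ, ℝ)) (x : ℝ) :
    (1 + x^2) * |f x| ≤ SchwartzMap.seminorm ℝ 0 0 f + SchwartzMap.seminorm ℝ 2 0 f := by
  have h0 : ‖f x‖ ≤ SchwartzMap.seminorm ℝ 0 0 f := f.norm_le_seminorm ℝ x
  have h2 : ‖x‖^2 * ‖f x‖ ≤ SchwartzMap.seminorm ℝ 2 0 f := f.norm_pow_mul_le_seminorm ℝ 2 x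
  have hx : ‖x‖^2 = x^2 := by
    rw [Real.norm_eq_abs, sq_abs]
  rw [Real.norm_eq_abs, sq_abs] at h2
  rw [Real.norm_eq_abs] at h0 h2
  nlinarith [abs_nonneg (f x)]

lemma cont_seminorm (k n : ℕ) :
    Continuous fun f : 𝓢(ℝ, ℝ) => SchwartzMap.seminorm ℝ k n f :=
  (schwartz_withSeminorms ℝ ℝ ℝ).continuous_seminorm (⟨k, n⟩ : ℕ × ℕ)

lemma schwartz_hasDerivAt (f : 𝓢(ℝ, ℝ)) (x : ℝ) :
    HasDerivAt (f : ℝ → ℝ) (SchwartzMap.derivCLM ℝ ℝ f x) x := by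
  rw [SchwartzMap.derivCLM_apply]
  exact f.differentiableAt.hasDerivAt

lemma kdv_flux (ε : ℝ) (u v : 𝓢(ℝ, ℝ))
    (hv : ∀ x, v x = -(deriv (u : ℝ → ℝ) x + (3/2)*ε*(u x)*(deriv (u : ℝ → ℝ) x)
      + (1/6)*ε*(deriv^[3] (u : ℝ → ℝ) x))) :
    ∫ x : ℝ, ((2/3) * deriv (u : ℝ → ℝ) x * deriv (v : ℝ → ℝ) x - 3 * (u x)^2 * (v x)) = 0 := by
  set D : 𝓢(ℝ, ℝ) →L[ℝ] 𝓢(ℝ, ℝ) := SchwartzMap.derivCLM ℝ ℝ with hD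
  set u1 := D u with hu1
  set u2 := D u1 with hu2
  set u3 := D u2 with hu3
  set u4 := D u3 with hu4
  have hDcoe : ∀ f : 𝓢(ℝ, ℝ), (D f : ℝ → ℝ) = deriv (f : ℝ → ℝ) :=
    fun f => funext fun x => SchwartzMap.derivCLM_apply ℝ f x
  have e1 : (u1 : ℝ → ℝ) = deriv (u : ℝ → ℝ) := hDcoe u
  have e2 : (u2 : ℝ → ℝ) = deriv (deriv (u : ℝ → ℝ)) := by rw [hu2, hDcoe, e1]
  have e3 : (u3 : ℝ → ℝ) = deriv (deriv (deriv (u : ℝ → ℝ))) := by rw [hu3, hDcoe, e2]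
  have h3 : deriv^[3] (u : ℝ → ℝ) = (u3 : ℝ → ℝ) := by
    rw [e3]
    simp [Function.iterate_succ, Function.comp]
  have h0 : ∀ x, HasDerivAt (u : ℝ → ℝ) (u1 x) x := fun x => schwartz_hasDerivAt u x
  have h1 : ∀ x, HasDerivAt (u1 : ℝ → ℝ) (u2 x) x := fun x => schwartz_hasDerivAt u1 x
  have h2 : ∀ x, HasDerivAt (u2 : ℝ → ℝ) (u3 x) x := fun x => schwartz_hasDerivAt u2 x
  have h3d : ∀ x, HasDerivAt (u3 : ℝ → ℝ) (u4 x) x := fun x => schwartz_hasDerivAt u3 x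
  set Q : 𝓢(ℝ, ℝ) := mulS (mulS u u) u + (((9:ℝ)/8)*ε) • mulS (mulS (mulS u u) u) u
      - (1/3 : ℝ) • mulS u1 u1 + ε • ((1/2 : ℝ) • mulS (mulS u u) u2 - mulS u (mulS u1 u1)
      - (1/9 : ℝ) • mulS u1 u3 + (1/18 : ℝ) • mulS u2 u2) with hQ
  have hQcoe : (Q : ℝ → ℝ) = fun y => (u y)^3 + (9/8)*ε*(u y)^4 - (1/3)*(u1 y)^2
      + ε*((1/2)*(u y)^2*(u2 y) - (u y)*(u1 y)^2 - (1/9)*(u1 y)*(u3 y) + (1/18)*(u2 y)^2) := by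
    funext y
    simp only [hQ, SchwartzMap.add_apply, SchwartzMap.sub_apply, SchwartzMap.smul_apply,
      mulS_apply, smul_eq_mul]
    ring
  apply integral_hasDerivAt_eq_zero Q
  intro x
  have T1 : HasDerivAt (fun y => (u y)^3) (3*(u x)^2*(u1 x)) x := by
    have := (h0 x).pow 3; exact this.congr_deriv (by ring)
  have T2 : HasDerivAt (fun y => (9/8)*ε*(u y)^4) ((9/8)*ε*(4*(u x)^3*(u1 x))) x := by
    have := ((h0 x).pow 4).const_mul ((9/8)*ε); exact this.congr_deriv (by ring)
  have T3 : HasDerivAt (fun y => (1/3)*(u1 y)^2) ((1/3)*(2*(u1 x)*(u2 x))) x := by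
    have := ((h1 x).pow 2).const_mul ((1:ℝ)/3); exact this.congr_deriv (by ring)
  have T4 : HasDerivAt (fun y => (1/2)*(u y)^2*(u2 y))
      ((u x)*(u1 x)*(u2 x) + (1/2)*(u x)^2*(u3 x)) x := by
    have := (((h0 x).pow 2).const_mul ((1:ℝ)/2)).mul (h2 x)
    exact this.congr_deriv (by simp only [Pi.pow_apply]; ring)
  have T5 : HasDerivAt (fun y => (u y)*(u1 y)^2)
      ((u1 x)^3 + 2*(u x)*(u1 x)*(u2 x)) x := by
    have := (h0 x).mul ((h1 x).pow 2)
    exact this.congr_deriv (by simp only [Pi.pow_apply]; ring)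
  have T6 : HasDerivAt (fun y => (1/9)*(u1 y)*(u3 y))
      ((1/9)*(u2 x)*(u3 x) + (1/9)*(u1 x)*(u4 x)) x := by
    have := ((h1 x).const_mul ((1:ℝ)/9)).mul (h3d x); exact this.congr_deriv (by ring)
  have T7 : HasDerivAt (fun y => (1/18)*(u2 y)^2) ((1/9)*(u2 x)*(u3 x)) x := by
    have := ((h2 x).pow 2).const_mul ((1:ℝ)/18); exact this.congr_deriv (by ring)
  have hQd := ((T1.add T2).sub T3).add ((((T4.sub T5).sub T6).add T7).const_mul ε)
  replace hQd := hQd.congr_of_eventuallyEq (Filter.Eventually.of_forall fun y => congrFun hQcoe y)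
  have hdu : deriv (u : ℝ → ℝ) x = u1 x := (congrFun e1 x).symm
  have hd3 : deriv^[3] (u : ℝ → ℝ) x = u3 x := congrFun h3 x
  have hvx0 : v x = -(u1 x + (3/2)*ε*(u x)*(u1 x) + (1/6)*ε*(u3 x)) := by
    rw [hv x, hdu, hd3]
  have hv' : (v : ℝ → ℝ) = fun y => -(u1 y + (3/2)*ε*(u y)*(u1 y) + (1/6)*ε*(u3 y)) := by
    funext y
    rw [hv y, (congrFun e1 y).symm, congrFun h3 y]
  have hvd : HasDerivAt (v : ℝ → ℝ)
      (-(u2 x + ((3/2)*ε*(u1 x)*(u1 x) + (3/2)*ε*(u x)*(u2 x)) + (1/6)*ε*(u4 x))) x := by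
    rw [hv']
    have hmid : HasDerivAt (fun y => (3/2)*ε*(u y)*(u1 y))
        ((3/2)*ε*(u1 x)*(u1 x) + (3/2)*ε*(u x)*(u2 x)) x := by
      have := (((h0 x).const_mul ((3/2)*ε)).mul (h1 x)); exact this.congr_deriv (by ring)
    exact (((h1 x).add hmid).add ((h3d x).const_mul ((1/6)*ε))).neg
  have hdv := hvd.deriv
  refine hQd.congr_deriv ?_
  rw [hdu, hdv, hvx0]
  ring

lemma decay_bound_add (x A Ct d a b i : ℝ) (heq : a = b + i)
    (hb : (1 + x^2) * |b| ≤ A) (hi : |i| ≤ Ct / (1 + x^2) * d) :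
    (1 + x^2) * |a| ≤ A + Ct * d := by
  have h1x : (0:ℝ) < 1 + x^2 := by positivity
  have h2 : (1 + x^2) * |i| ≤ Ct * d := by
    have := mul_le_mul_of_nonneg_left hi (le_of_lt h1x)
    rwa [← mul_assoc, mul_div_cancel₀ _ (ne_of_gt h1x)] at this
  have h3 : |a| ≤ |b| + |i| := heq ▸ abs_add_le b i
  nlinarith [abs_nonneg i]

lemma bound_cubic (d e z Cu : ℝ) (hz : 1 ≤ z) (hCu : 1 ≤ Cu)
    (hd : abs d * z ≤ Cu) (he : abs e * z ≤ Cu) :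
    abs ((1/3) * d^2 - e^3) * z ≤ Cu^2 + Cu^3 := by
  have hd0 := abs_nonneg d
  have he0 := abs_nonneg e
  have hz0 : (0:ℝ) ≤ z := by linarith
  have tri : abs ((1/3) * d^2 - e^3) ≤ (1/3) * (abs d)^2 + (abs e)^3 := by
    calc abs ((1/3) * d^2 - e^3) ≤ abs ((1/3) * d^2) + abs (e^3) := abs_sub _ _
    _ = (1/3) * (abs d)^2 + (abs e)^3 := by
        rw [abs_mul, abs_pow, abs_pow, show |(1:ℝ)/3| = 1/3 by norm_num]
  have h2 : (abs d * z)^2 ≤ Cu^2 := pow_le_pow_left₀ (by positivity) hd 2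
  have h3 : (abs e * z)^3 ≤ Cu^3 := pow_le_pow_left₀ (by positivity) he 3
  have hp2 : (abs d)^2 * z ≤ (abs d * z)^2 := by
    nlinarith [mul_nonneg (mul_nonneg (sq_nonneg (abs d)) hz0) (sub_nonneg.2 hz)]
  have hq3 : (abs e)^3 * z ≤ (abs e * z)^3 := by
    have hzz : (0:ℝ) ≤ z^2 - 1 := by nlinarith
    nlinarith [mul_nonneg (mul_nonneg (pow_nonneg he0 3) hz0) hzz]
  have htz := mul_le_mul_of_nonneg_right tri hz0
  nlinarith

lemma bound_quartic (d1 d2 e1 e2 z Cu Ct : ℝ) (hz : 1 ≤ z) (hCu : 1 ≤ Cu) (hCt : 1 ≤ Ct)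
    (hd1 : abs d1 * z ≤ Cu) (hd2 : abs d2 * z ≤ Ct)
    (he1 : abs e1 * z ≤ Cu) (he2 : abs e2 * z ≤ Ct) :
    abs ((2/3) * d1 * d2 - 3 * e1^2 * e2) * z ≤ Cu * Ct + 3 * Cu^2 * Ct := by
  have h1 := abs_nonneg d1
  have h2 := abs_nonneg d2
  have h3 := abs_nonneg e1
  have h4 := abs_nonneg e2
  have hz0 : (0:ℝ) ≤ z := by linarith
  have tri : abs ((2/3) * d1 * d2 - 3 * e1^2 * e2)
      ≤ (2/3) * (abs d1 * abs d2) + 3 * ((abs e1)^2 * abs e2) := by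
    calc abs ((2/3) * d1 * d2 - 3 * e1^2 * e2)
        ≤ abs ((2/3) * d1 * d2) + abs (3 * e1^2 * e2) := abs_sub _ _
    _ = (2/3) * (abs d1 * abs d2) + 3 * ((abs e1)^2 * abs e2) := by
        rw [abs_mul, abs_mul, abs_mul, abs_mul, abs_pow,
          show |(2:ℝ)/3| = 2/3 by norm_num, show |(3:ℝ)| = 3 by norm_num]
        ring
  have k1 : (abs d1 * z) * (abs d2 * z) ≤ Cu * Ct :=
    mul_le_mul hd1 hd2 (by positivity) (by linarith)
  have k2 : ((abs e1 * z)^2) * (abs e2 * z) ≤ Cu^2 * Ct :=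
    mul_le_mul (pow_le_pow_left₀ (by positivity) he1 2) he2 (by positivity) (by positivity)
  have hp : (abs d1 * abs d2) * z ≤ (abs d1 * z) * (abs d2 * z) := by
    nlinarith [mul_nonneg (mul_nonneg (mul_nonneg h1 h2) hz0) (sub_nonneg.2 hz)]
  have hq : ((abs e1)^2 * abs e2) * z ≤ ((abs e1 * z)^2) * (abs e2 * z) := by
    have hzz : (0:ℝ) ≤ z^2 - 1 := by nlinarith
    nlinarith [mul_nonneg (mul_nonneg (mul_nonneg (sq_nonneg (abs e1)) h4) hz0) hzz]
  have htz := mul_le_mul_of_nonneg_right tri hz0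
  nlinarith

lemma seminorm_nonneg' (k n : ℕ) (f : 𝓢(ℝ, ℝ)) :
    0 ≤ SchwartzMap.seminorm ℝ k n f := apply_nonneg _ f

/-- Conservation of the third classical invariant `∫ ((1/3)(∂ₓη)² − η³) dx` for
Schwartz-class solutions of the KdV equation on a time interval `[t₁, t₂]`.  The solution
is given as a curve `η : ℝ → 𝓢(ℝ, ℝ)` in Schwartz space which is continuously
differentiable in time: its pointwise time derivative `ηt t` is again a Schwartz function
for each `t ∈ [t₁, t₂]`, and `t ↦ ηt t` is continuous into Schwartz space. -/
theorem kdv_third_invariant_conserved (ε t₁ t₂ : ℝ) (hε : 0 < ε) (ht : t₁ ≤ t₂)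
    (η : ℝ → SchwartzMap ℝ ℝ) (ηt : ℝ → SchwartzMap ℝ ℝ)
    (hderiv : ∀ t ∈ Set.Icc t₁ t₂, ∀ x : ℝ, HasDerivAt (fun s => η s x) (ηt t x) t)
    (hcont : ContinuousOn ηt (Set.Icc t₁ t₂))
    (hKdV : ∀ t ∈ Set.Icc t₁ t₂, ∀ x : ℝ,
      ηt t x + deriv (fun y => η t y) x
        + (3/2) * ε * η t x * deriv (fun y => η t y) x
        + (1/6) * ε * deriv^[3] (fun y => η t y) x = 0) :
    ∫ x : ℝ, ((1/3) * (deriv (fun y => η t₁ y) x)^2 - (η t₁ x)^3)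
      = ∫ x : ℝ, ((1/3) * (deriv (fun y => η t₂ y) x)^2 - (η t₂ x)^3) := by
  have hmemI : ∀ {s}, s ∈ Set.Icc t₁ t₂ → Set.uIcc t₁ s ⊆ Set.Icc t₁ t₂ := by
    intro s hs
    rw [Set.uIcc_of_le hs.1]
    exact Set.Icc_subset_Icc le_rfl hs.2
  have heval : ∀ x : ℝ, Continuous fun f : 𝓢(ℝ, ℝ) => f x :=
    fun x => by
      have := (continuous_eval_const x : Continuous fun g : BoundedContinuousFunction ℝ ℝ => g x).comp
        (SchwartzMap.toBoundedContinuousFunctionCLM ℝ ℝ ℝ).continuous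
      exact this
  have hDcoe : ∀ f : 𝓢(ℝ, ℝ), (SchwartzMap.derivCLM ℝ ℝ f : ℝ → ℝ) = deriv (f : ℝ → ℝ) :=
    fun f => funext fun x => SchwartzMap.derivCLM_apply ℝ f x
  -- uniform decay bounds for `ηt` over the compact time interval
  obtain ⟨Ct, hCt1, hCt⟩ : ∃ C : ℝ, 1 ≤ C ∧ ∀ s ∈ Set.Icc t₁ t₂, ∀ x : ℝ,
      (1 + x^2) * |ηt s x| ≤ C ∧ (1 + x^2) * |deriv (ηt s : ℝ → ℝ) x| ≤ C := by
    set φ : 𝓢(ℝ, ℝ) → ℝ := fun f =>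
      (SchwartzMap.seminorm ℝ 0 0 f + SchwartzMap.seminorm ℝ 2 0 f)
      + (SchwartzMap.seminorm ℝ 0 0 (SchwartzMap.derivCLM ℝ ℝ f)
        + SchwartzMap.seminorm ℝ 2 0 (SchwartzMap.derivCLM ℝ ℝ f)) with hφ
    have hφc : Continuous φ := by
      refine ((cont_seminorm 0 0).add (cont_seminorm 2 0)).add ?_
      exact ((cont_seminorm 0 0).add (cont_seminorm 2 0)).comp
        (SchwartzMap.derivCLM ℝ ℝ : 𝓢(ℝ,ℝ) →L[ℝ] 𝓢(ℝ,ℝ)).continuous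
    obtain ⟨C, hC⟩ := (isCompact_Icc.image_of_continuousOn
      (hφc.comp_continuousOn hcont)).bddAbove
    refine ⟨max C 1, le_max_right _ _, fun s hs x => ?_⟩
    have hφs : φ (ηt s) ≤ max C 1 :=
      le_trans (hC (Set.mem_image_of_mem _ hs)) (le_max_left _ _)
    have hb1 := schwartz_decay_bound (ηt s) x
    have hb2 := schwartz_decay_bound (SchwartzMap.derivCLM ℝ ℝ (ηt s)) x
    rw [congrFun (hDcoe (ηt s)) x] at hb2
    have n1 := seminorm_nonneg' 0 0 (ηt s)
    have n2 := seminorm_nonneg' 2 0 (ηt s)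
    have n3 := seminorm_nonneg' 0 0 (SchwartzMap.derivCLM ℝ ℝ (ηt s))
    have n4 := seminorm_nonneg' 2 0 (SchwartzMap.derivCLM ℝ ℝ (ηt s))
    simp only [hφ] at hφs
    constructor
    · linarith
    · linarith
  -- pointwise time-continuity facts
  have hcont_e : ∀ x : ℝ, ContinuousOn (fun τ => ηt τ x) (Set.Icc t₁ t₂) :=
    fun x => (heval x).comp_continuousOn hcont
  have hcont_d : ∀ x : ℝ, ContinuousOn (fun τ => deriv (ηt τ : ℝ → ℝ) x) (Set.Icc t₁ t₂) := by
    intro x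
    have h1 : ContinuousOn (fun τ => (SchwartzMap.derivCLM ℝ ℝ (ηt τ)) x) (Set.Icc t₁ t₂) :=
      (heval x).comp_continuousOn
        ((SchwartzMap.derivCLM ℝ ℝ : 𝓢(ℝ,ℝ) →L[ℝ] 𝓢(ℝ,ℝ)).continuous.comp_continuousOn hcont)
    exact h1.congr fun τ _ => (SchwartzMap.derivCLM_apply ℝ (ηt τ) x).symm
  -- fundamental theorem of calculus representation, pointwise in x
  have hrep : ∀ s ∈ Set.Icc t₁ t₂, ∀ x : ℝ, η s x - η t₁ x = ∫ τ in t₁..s, ηt τ x := by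
    intro s hs x
    rw [intervalIntegral.integral_eq_sub_of_hasDerivAt
      (fun τ hτ => hderiv τ (hmemI hs hτ) x)
      (((hcont_e x).mono (hmemI hs)).intervalIntegrable)]
  -- same representation for the spatial derivative
  have hrep' : ∀ s ∈ Set.Icc t₁ t₂, ∀ x : ℝ,
      deriv (η s : ℝ → ℝ) x - deriv (η t₁ : ℝ → ℝ) x
        = ∫ τ in t₁..s, deriv (ηt τ : ℝ → ℝ) x := by
    intro s hs x
    have key : HasDerivAt (fun y => ∫ τ in t₁..s, ηt τ y)
        (∫ τ in t₁..s, deriv (ηt τ : ℝ → ℝ) x) x := by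
      refine (intervalIntegral.hasDerivAt_integral_of_dominated_loc_of_deriv_le
        (F := fun y τ => ηt τ y) (F' := fun y τ => deriv (ηt τ : ℝ → ℝ) y)
        (bound := fun _ => Ct) (μ := volume) (a := t₁) (b := s) (x₀ := x) (s := Metric.ball x 1)
        (Metric.ball_mem_nhds x one_pos) ?_ ?_ ?_ ?_ ?_ ?_).2
      · exact Filter.Eventually.of_forall fun y =>
          (((hcont_e y).mono ((Set.uIoc_subset_uIcc).trans (hmemI hs))).aestronglyMeasurable
            measurableSet_uIoc)
      · exact ((hcont_e x).mono (hmemI hs)).intervalIntegrable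
      · exact (((hcont_d x).mono ((Set.uIoc_subset_uIcc).trans (hmemI hs))).aestronglyMeasurable
          measurableSet_uIoc)
      · refine Filter.Eventually.of_forall fun τ hτ y _ => ?_
        have h := (hCt τ ((Set.uIoc_subset_uIcc.trans (hmemI hs)) hτ) y).2
        have h1y : (0:ℝ) < 1 + y^2 := by positivity
        rw [Real.norm_eq_abs]
        nlinarith [abs_nonneg (deriv (ηt τ : ℝ → ℝ) y), sq_nonneg y]
      · exact intervalIntegrable_const
      · exact Filter.Eventually.of_forall fun τ _ y _ =>
          (ηt τ).differentiableAt.hasDerivAt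
    have hfun : (fun y => ∫ τ in t₁..s, ηt τ y) = fun y => η s y - η t₁ y :=
      funext fun y => (hrep s hs y).symm
    rw [hfun] at key
    exact ((((η s).differentiableAt.hasDerivAt).sub
      ((η t₁).differentiableAt.hasDerivAt)).unique key)
  -- uniform decay bounds for `η` over the compact time interval
  obtain ⟨Cu, hCu1, hCu⟩ : ∃ C : ℝ, 1 ≤ C ∧ ∀ s ∈ Set.Icc t₁ t₂, ∀ x : ℝ,
      (1 + x^2) * |η s x| ≤ C ∧ (1 + x^2) * |deriv (η s : ℝ → ℝ) x| ≤ C := by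
    set A : ℝ := (SchwartzMap.seminorm ℝ 0 0 (η t₁) + SchwartzMap.seminorm ℝ 2 0 (η t₁))
      + (SchwartzMap.seminorm ℝ 0 0 (SchwartzMap.derivCLM ℝ ℝ (η t₁))
        + SchwartzMap.seminorm ℝ 2 0 (SchwartzMap.derivCLM ℝ ℝ (η t₁))) with hA
    refine ⟨max (A + Ct * (t₂ - t₁)) 1, le_max_right _ _, fun s hs x => ?_⟩
    have h1x : (0:ℝ) < 1 + x^2 := by positivity
    have hsd : |s - t₁| ≤ t₂ - t₁ := by
      rw [abs_of_nonneg (sub_nonneg.2 hs.1)]; linarith [hs.2]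
    have n1 := seminorm_nonneg' 0 0 (η t₁)
    have n2 := seminorm_nonneg' 2 0 (η t₁)
    have n3 := seminorm_nonneg' 0 0 (SchwartzMap.derivCLM ℝ ℝ (η t₁))
    have n4 := seminorm_nonneg' 2 0 (SchwartzMap.derivCLM ℝ ℝ (η t₁))
    constructor
    · have hIb : ‖∫ τ in t₁..s, ηt τ x‖ ≤ Ct / (1 + x^2) * |s - t₁| := by
        refine intervalIntegral.norm_integral_le_of_norm_le_const fun τ hτ => ?_
        have h := (hCt τ ((Set.uIoc_subset_uIcc.trans (hmemI hs)) hτ) x).1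
        rw [Real.norm_eq_abs, le_div_iff₀ h1x]
        nlinarith
      have hb1 := schwartz_decay_bound (η t₁) x
      have hIb2 : |∫ τ in t₁..s, ηt τ x| ≤ Ct / (1 + x^2) * (t₂ - t₁) := by
        rw [← Real.norm_eq_abs]
        refine hIb.trans ?_
        have : (0:ℝ) ≤ Ct / (1 + x^2) := by positivity
        exact mul_le_mul_of_nonneg_left hsd this
      have := decay_bound_add x A Ct (t₂ - t₁) (η s x) (η t₁ x)
        (∫ τ in t₁..s, ηt τ x) (by linarith [hrep s hs x]) (by rw [hA]; linarith) hIb2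
      exact this.trans (le_max_left _ _)
    · have hIb : ‖∫ τ in t₁..s, deriv (ηt τ : ℝ → ℝ) x‖ ≤ Ct / (1 + x^2) * |s - t₁| := by
        refine intervalIntegral.norm_integral_le_of_norm_le_const fun τ hτ => ?_
        have h := (hCt τ ((Set.uIoc_subset_uIcc.trans (hmemI hs)) hτ) x).2
        rw [Real.norm_eq_abs, le_div_iff₀ h1x]
        nlinarith
      have hb2 := schwartz_decay_bound (SchwartzMap.derivCLM ℝ ℝ (η t₁)) x
      rw [congrFun (hDcoe (η t₁)) x] at hb2
      have hIb2 : |∫ τ in t₁..s, deriv (ηt τ : ℝ → ℝ) x| ≤ Ct / (1 + x^2) * (t₂ - t₁) := by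
        rw [← Real.norm_eq_abs]
        refine hIb.trans ?_
        have : (0:ℝ) ≤ Ct / (1 + x^2) := by positivity
        exact mul_le_mul_of_nonneg_left hsd this
      have := decay_bound_add x A Ct (t₂ - t₁) (deriv (η s : ℝ → ℝ) x)
        (deriv (η t₁ : ℝ → ℝ) x) (∫ τ in t₁..s, deriv (ηt τ : ℝ → ℝ) x)
        (by linarith [hrep' s hs x]) (by rw [hA]; linarith) hIb2
      exact this.trans (le_max_left _ _)
  -- interchange of time and space derivatives
  have hswap : ∀ t ∈ Set.Ioo t₁ t₂, ∀ x : ℝ,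
      HasDerivAt (fun s => deriv (η s : ℝ → ℝ) x) (deriv (ηt t : ℝ → ℝ) x) t := by
    intro t htI x
    have htmem : t ∈ Set.Icc t₁ t₂ := Set.Ioo_subset_Icc_self htI
    have hIoo : Set.Icc t₁ t₂ ∈ 𝓝 t := Icc_mem_nhds htI.1 htI.2
    have hprim : HasDerivAt (fun s => ∫ τ in t₁..s, deriv (ηt τ : ℝ → ℝ) x)
        (deriv (ηt t : ℝ → ℝ) x) t := by
      apply intervalIntegral.integral_hasDerivAt_right
      · exact ((hcont_d x).mono (hmemI htmem)).intervalIntegrable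
      · exact ⟨Set.Icc t₁ t₂, hIoo, (hcont_d x).aestronglyMeasurable measurableSet_Icc⟩
      · exact (hcont_d x).continuousAt hIoo
    have hconst := hprim.const_add (deriv (η t₁ : ℝ → ℝ) x)
    apply hconst.congr_of_eventuallyEq
    filter_upwards [hIoo] with s hs
    have := hrep' s hs x
    linarith
  -- the integrand and its time derivative
  set g : ℝ → ℝ → ℝ := fun t x => (1/3) * (deriv (η t : ℝ → ℝ) x)^2 - (η t x)^3 with hgdef
  set gt : ℝ → ℝ → ℝ := fun t x =>
    (2/3) * deriv (η t : ℝ → ℝ) x * deriv (ηt t : ℝ → ℝ) x - 3 * (η t x)^2 * (ηt t x) with hgtdef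
  set K : ℝ := Cu^2 + Cu^3 + Cu * Ct + 3 * Cu^2 * Ct with hK
  set bnd : ℝ → ℝ := fun x => K / (1 + x^2) with hbnd
  have hbnd_int : Integrable bnd := by
    have : Integrable (fun x : ℝ => K * (1 + x^2)⁻¹) := integrable_inv_one_add_sq.const_mul K
    refine this.congr (Filter.EventuallyEq.of_eq (funext fun x => ?_))
    simp [hbnd, div_eq_mul_inv, mul_comm]
  have hKnn : 0 ≤ Cu * Ct + 3 * Cu^2 * Ct := by positivity
  have hKnn2 : 0 ≤ Cu^2 + Cu^3 := by positivity
  -- pointwise bounds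
  have hgb : ∀ s ∈ Set.Icc t₁ t₂, ∀ x : ℝ, |g s x| ≤ bnd x := by
    intro s hs x
    have h1x : (0:ℝ) < 1 + x^2 := by positivity
    have hz : (1:ℝ) ≤ 1 + x^2 := by nlinarith [sq_nonneg x]
    rw [hbnd, le_div_iff₀ h1x]
    have hd := (hCu s hs x).2
    have he := (hCu s hs x).1
    have := bound_cubic (deriv (η s : ℝ → ℝ) x) (η s x) (1 + x^2) Cu hz hCu1
      (by linarith [mul_comm (1 + x^2) |deriv (η s : ℝ → ℝ) x|])
      (by linarith [mul_comm (1 + x^2) |(η s) x|])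
    rw [hK, hgdef]
    calc |(1/3) * (deriv (η s : ℝ → ℝ) x)^2 - (η s x)^3| * (1 + x^2) ≤ Cu^2 + Cu^3 := this
    _ ≤ Cu^2 + Cu^3 + (Cu * Ct + 3 * Cu^2 * Ct) := by linarith
    _ = Cu^2 + Cu^3 + Cu * Ct + 3 * Cu^2 * Ct := by ring
  have hgtb : ∀ s ∈ Set.Icc t₁ t₂, ∀ x : ℝ, |gt s x| ≤ bnd x := by
    intro s hs x
    have h1x : (0:ℝ) < 1 + x^2 := by positivity
    have hz : (1:ℝ) ≤ 1 + x^2 := by nlinarith [sq_nonneg x]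
    rw [hbnd, le_div_iff₀ h1x]
    have hd1 := (hCu s hs x).2
    have he1 := (hCu s hs x).1
    have hd2 := (hCt s hs x).2
    have he2 := (hCt s hs x).1
    have := bound_quartic (deriv (η s : ℝ → ℝ) x) (deriv (ηt s : ℝ → ℝ) x)
      (η s x) (ηt s x) (1 + x^2) Cu Ct hz hCu1 hCt1
      (by linarith [mul_comm (1 + x^2) |deriv (η s : ℝ → ℝ) x|])
      (by linarith [mul_comm (1 + x^2) |deriv (ηt s : ℝ → ℝ) x|])
      (by linarith [mul_comm (1 + x^2) |(η s) x|])
      (by linarith [mul_comm (1 + x^2) |(ηt s) x|])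
    rw [hK, hgtdef]
    calc |(2/3) * deriv (η s : ℝ → ℝ) x * deriv (ηt s : ℝ → ℝ) x
          - 3 * (η s x)^2 * (ηt s x)| * (1 + x^2)
        ≤ Cu * Ct + 3 * Cu^2 * Ct := this
    _ ≤ Cu^2 + Cu^3 + (Cu * Ct + 3 * Cu^2 * Ct) := by linarith
    _ = Cu^2 + Cu^3 + Cu * Ct + 3 * Cu^2 * Ct := by ring
  -- continuity in x (measurability)
  have hgc : ∀ s : ℝ, Continuous (g s) := by
    intro s
    have h1 : Continuous (deriv (η s : ℝ → ℝ)) := by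
      rw [← hDcoe (η s)]; exact (SchwartzMap.derivCLM ℝ ℝ (η s)).continuous
    rw [hgdef]
    exact (continuous_const.mul (h1.pow 2)).sub ((η s).continuous.pow 3)
  have hgtc : ∀ s : ℝ, Continuous (gt s) := by
    intro s
    have h1 : Continuous (deriv (η s : ℝ → ℝ)) := by
      rw [← hDcoe (η s)]; exact (SchwartzMap.derivCLM ℝ ℝ (η s)).continuous
    have h2 : Continuous (deriv (ηt s : ℝ → ℝ)) := by
      rw [← hDcoe (ηt s)]; exact (SchwartzMap.derivCLM ℝ ℝ (ηt s)).continuous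
    rw [hgtdef]
    exact ((continuous_const.mul h1).mul h2).sub
      ((continuous_const.mul ((η s).continuous.pow 2)).mul (ηt s).continuous)
  have hgint : ∀ s ∈ Set.Icc t₁ t₂, Integrable (g s) := by
    intro s hs
    exact hbnd_int.mono' (hgc s).aestronglyMeasurable
      (Filter.Eventually.of_forall fun x => by
        rw [Real.norm_eq_abs]; exact hgb s hs x)
  -- time derivative of the integrand
  have hgdiff : ∀ s ∈ Set.Ioo t₁ t₂, ∀ x : ℝ, HasDerivAt (fun r => g r x) (gt s x) s := by
    intro s hs x
    have h1 := hderiv s (Set.Ioo_subset_Icc_self hs) x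
    have h2 := hswap s hs x
    have hcomb := ((h2.pow 2).const_mul ((1:ℝ)/3)).sub (h1.pow 3)
    rw [hgdef, hgtdef]
    exact hcomb.congr_deriv (by ring)
  -- derivative of the integral
  have hFd : ∀ t ∈ Set.Ioo t₁ t₂,
      HasDerivAt (fun s => ∫ x : ℝ, g s x) (∫ x : ℝ, gt t x) t := by
    intro t htI
    obtain ⟨δ, hδ0, hδ⟩ : ∃ δ > 0, Metric.ball t δ ⊆ Set.Ioo t₁ t₂ :=
      Metric.isOpen_iff.1 isOpen_Ioo t htI
    refine (hasDerivAt_integral_of_dominated_loc_of_deriv_le (μ := volume)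
      (F := fun s x => g s x) (F' := fun s x => gt s x) (x₀ := t) (s := Metric.ball t δ)
      (bound := bnd) (Metric.ball_mem_nhds t hδ0) ?_ ?_ ?_ ?_ ?_ ?_).2
    · exact Filter.Eventually.of_forall fun s => (hgc s).aestronglyMeasurable
    · exact hgint t (Set.Ioo_subset_Icc_self htI)
    · exact (hgtc t).aestronglyMeasurable
    · exact Filter.Eventually.of_forall fun x s hsb => by
        rw [Real.norm_eq_abs]
        exact hgtb s (Set.Ioo_subset_Icc_self (hδ hsb)) x
    · exact hbnd_int
    · exact Filter.Eventually.of_forall fun x s hsb => hgdiff s (hδ hsb) x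
  -- the space integral of the time derivative vanishes (KdV + integration by parts)
  have hzero : ∀ t ∈ Set.Icc t₁ t₂, (∫ x : ℝ, gt t x) = 0 := by
    intro t htI
    have hv : ∀ x : ℝ, ηt t x = -(deriv (η t : ℝ → ℝ) x
        + (3/2)*ε*(η t x)*(deriv (η t : ℝ → ℝ) x)
        + (1/6)*ε*(deriv^[3] (η t : ℝ → ℝ) x)) := by
      intro x
      have := hKdV t htI x
      linarith
    have := kdv_flux ε (η t) (ηt t) hv
    rw [hgtdef]
    exact this
  -- continuity of the integral in time
  have hce : ∀ x : ℝ, ContinuousOn (fun s => η s x) (Set.Icc t₁ t₂) :=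
    fun x s hs => ((hderiv s hs x).continuousAt).continuousWithinAt
  have hcd : ∀ x : ℝ, ContinuousOn (fun s => deriv (η s : ℝ → ℝ) x) (Set.Icc t₁ t₂) := by
    intro x
    have hint : IntegrableOn (fun τ => deriv (ηt τ : ℝ → ℝ) x) (Set.uIcc t₁ t₂) := by
      rw [Set.uIcc_of_le ht]
      exact (hcont_d x).integrableOn_Icc
    have hprim := intervalIntegral.continuousOn_primitive_interval (a := t₁) (b := t₂)
      (μ := volume) hint
    rw [Set.uIcc_of_le ht] at hprim
    refine ((continuousOn_const (c := deriv (η t₁ : ℝ → ℝ) x)).add hprim).congr fun s hs => ?_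
    have := hrep' s hs x
    simp only [Pi.add_apply]
    linarith
  have hFc : ContinuousOn (fun s => ∫ x : ℝ, g s x) (Set.Icc t₁ t₂) := by
    refine MeasureTheory.continuousOn_of_dominated
      (bound := bnd) (fun s _ => (hgc s).aestronglyMeasurable) ?_ hbnd_int ?_
    · intro s hs
      exact Filter.Eventually.of_forall fun x => by
        rw [Real.norm_eq_abs]; exact hgb s hs x
    · refine Filter.Eventually.of_forall fun x => ?_
      rw [hgdef]
      exact (continuousOn_const.mul ((hcd x).pow 2)).sub ((hce x).pow 3)
  -- fundamental theorem of calculus: the integral is constant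
  have hFTC := intervalIntegral.integral_eq_sub_of_hasDeriv_right_of_le ht hFc
    (f' := fun _ => (0:ℝ))
    (fun s hs => by
      have h := hFd s hs
      rw [hzero s (Set.Ioo_subset_Icc_self hs)] at h
      exact h.hasDerivWithinAt)
    intervalIntegrable_const
  simp only [intervalIntegral.integral_zero] at hFTC
  have hfin : (∫ x : ℝ, g t₁ x) = ∫ x : ℝ, g t₂ x := by linarith
  rw [hgdef] at hfin
  exact hfin
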